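/- For every ε ∈ (0,1], q ∈ [1,∞), and x ∈ ℝ^p, the εq-norm satisfies ‖x‖_q / (p^{1/q}(1−ε) + ε) ≤ ‖x‖_{εq} ≤ ‖x‖_q, where ‖x‖_q = (∑_{i=1}^p |x_i|^q)^{1/q}. Moreover both inequalities are attained: the upper bound holds with equality when x is a standard unit vector, and the lower bound holds with equality when x is the all-ones vector. -/

import Mathlib

/-- The ℓ_q norm on `ℝ^p` (for a real exponent `q`). -/
noncomputable def lqNorm (p : ℕ) (q : ℝ) (x : Fin p → ℝ) : ℝ :=
  (∑ i : Fin p, |x i| ^ q) ^ (1 / q)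

/-- Let `N` be the εq-norm.  Then
`‖x‖_q / (p^{1/q}(1-ε) + ε) ≤ N x ≤ ‖x‖_q` for all `x`, the upper bound is attained
at every standard unit vector, and the lower bound is attained at the all-ones vector. -/
theorem epsq_norm_lq_bounds (p : ℕ) (ε q : ℝ)
    (hε0 : 0 < ε) (hε1 : ε ≤ 1) (hq : 1 ≤ q)
    (N : (Fin p → ℝ) → ℝ)
    (hN0 : ∀ x : Fin p → ℝ, 0 ≤ N x)
    (hNeq : ∀ x : Fin p → ℝ,
      ∑ i : Fin p, (max (|x i| - (1 - ε) * N x) 0) ^ q = (ε * N x) ^ q) :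
    (∀ x : Fin p → ℝ,
      lqNorm p q x / ((p : ℝ) ^ (1 / q) * (1 - ε) + ε) ≤ N x ∧ N x ≤ lqNorm p q x) ∧
    (∀ i : Fin p, N (Pi.single i 1) = lqNorm p q (Pi.single i 1)) ∧
    (N (fun _ => 1) =
      lqNorm p q (fun _ => 1) / ((p : ℝ) ^ (1 / q) * (1 - ε) + ε)) := by
  have hq0 : (0:ℝ) < q := lt_of_lt_of_le one_pos hq
  have hq0' : q ≠ 0 := ne_of_gt hq0
  have h1ε : 0 ≤ 1 - ε := by linarith
  have hD : 0 < (p : ℝ) ^ (1 / q) * (1 - ε) + ε := by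
    have : 0 ≤ (p : ℝ) ^ (1 / q) := Real.rpow_nonneg (Nat.cast_nonneg p) _
    nlinarith
  set D := (p : ℝ) ^ (1 / q) * (1 - ε) + ε with hDdef
  -- bounds
  have bounds : ∀ x : Fin p → ℝ,
      lqNorm p q x / D ≤ N x ∧ N x ≤ lqNorm p q x := by
    intro x
    set v := N x with hv
    have hv0 : 0 ≤ v := hN0 x
    have heq := hNeq x
    have hεv : 0 ≤ ε * v := mul_nonneg hε0.le hv0
    constructor
    · -- lower bound
      have key : lqNorm p q x ≤ D * v := by
        have step1 : lqNorm p q x ≤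
            (∑ i : Fin p, (max (|x i| - (1 - ε) * v) 0 + (1 - ε) * v) ^ q) ^ (1 / q) := by
          apply Real.rpow_le_rpow (Finset.sum_nonneg fun i _ =>
            Real.rpow_nonneg (abs_nonneg _) _)
          · apply Finset.sum_le_sum
            intro i _
            apply Real.rpow_le_rpow (abs_nonneg _) _ hq0.le
            have : |x i| - (1-ε)*v ≤ max (|x i| - (1-ε)*v) 0 := le_max_left _ _
            linarith
          · positivity
        have step2 : (∑ i : Fin p, (max (|x i| - (1 - ε) * v) 0 + (1 - ε) * v) ^ q) ^ (1 / q) ≤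
            (∑ i : Fin p, (max (|x i| - (1 - ε) * v) 0) ^ q) ^ (1 / q) +
            (∑ i : Fin p, ((1 - ε) * v) ^ q) ^ (1 / q) := by
          exact Real.Lp_add_le_of_nonneg (f := fun i => max (|x i| - (1 - ε) * v) 0)
            (g := fun _ => (1 - ε) * v) (s := Finset.univ) hq (fun i _ => le_max_right _ _)
            (fun i _ => mul_nonneg h1ε hv0)
        have e1 : (∑ i : Fin p, (max (|x i| - (1 - ε) * v) 0) ^ q) ^ (1 / q) = ε * v := by
          rw [heq, one_div, Real.rpow_rpow_inv hεv hq0']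
        have e2 : (∑ i : Fin p, ((1 - ε) * v) ^ q) ^ (1 / q) = (p:ℝ) ^ (1/q) * ((1-ε)*v) := by
          rw [Finset.sum_const, Finset.card_univ, Fintype.card_fin, nsmul_eq_mul,
            Real.mul_rpow (Nat.cast_nonneg p) (Real.rpow_nonneg (mul_nonneg h1ε hv0) _),
            one_div, Real.rpow_rpow_inv (mul_nonneg h1ε hv0) hq0']
        calc lqNorm p q x ≤ _ := step1
          _ ≤ _ := step2
          _ = ε * v + (p:ℝ) ^ (1/q) * ((1-ε)*v) := by rw [e1, e2]
          _ = D * v := by ring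
      rw [div_le_iff₀ hD]
      linarith [key]
    · -- upper bound
      have hterm : ∀ i, max (|x i| - (1 - ε) * v) 0 ≤ ε * |x i| := by
        intro i
        by_contra hcon
        push_neg at hcon
        have hax : v < |x i| := by
          rcases max_cases (|x i| - (1 - ε) * v) 0 with ⟨hm, _⟩ | ⟨hm, _⟩
          · rw [hm] at hcon; nlinarith [abs_nonneg (x i)]
          · rw [hm] at hcon; nlinarith [abs_nonneg (x i)]
        have hbig : ε * v < max (|x i| - (1 - ε) * v) 0 := by
          have : ε * v < |x i| - (1-ε)*v := by nlinarith
          exact lt_of_lt_of_le this (le_max_left _ _)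
        have hsum : (ε*v)^q < ∑ j : Fin p, (max (|x j| - (1 - ε) * v) 0) ^ q := by
          have h1 : (ε*v)^q < (max (|x i| - (1 - ε) * v) 0)^q :=
            Real.rpow_lt_rpow hεv hbig hq0
          calc (ε*v)^q < (max (|x i| - (1 - ε) * v) 0)^q := h1
            _ ≤ ∑ j : Fin p, (max (|x j| - (1 - ε) * v) 0) ^ q :=
              Finset.single_le_sum (f := fun j => (max (|x j| - (1 - ε) * v) 0) ^ q)
                (fun j _ => Real.rpow_nonneg (le_max_right _ _) _) (Finset.mem_univ i)
        rw [heq] at hsum; exact lt_irrefl _ hsum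
      have hkey : (ε*v)^q ≤ ε^q * ∑ i : Fin p, |x i| ^ q := by
        rw [← heq, Finset.mul_sum]
        apply Finset.sum_le_sum
        intro i _
        rw [← Real.mul_rpow hε0.le (abs_nonneg _)]
        exact Real.rpow_le_rpow (le_max_right _ _) (hterm i) hq0.le
      have hvq : v ^ q ≤ ∑ i : Fin p, |x i| ^ q := by
        rw [Real.mul_rpow hε0.le hv0] at hkey
        have hεq : 0 < ε ^ q := Real.rpow_pos_of_pos hε0 _
        exact le_of_mul_le_mul_left hkey hεq
      calc v = (v ^ q) ^ (1/q) := by rw [one_div, Real.rpow_rpow_inv hv0 hq0']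
        _ ≤ lqNorm p q x := Real.rpow_le_rpow (Real.rpow_nonneg hv0 _) hvq (by positivity)
  refine ⟨bounds, ?_, ?_⟩
  · -- unit vector
    intro i
    set v := N (Pi.single i 1) with hv
    have hv0 : 0 ≤ v := hN0 _
    have heq := hNeq (Pi.single i 1)
    have habs : ∀ j : Fin p, |(Pi.single i (1:ℝ) : Fin p → ℝ) j| = if j = i then 1 else 0 := by
      intro j
      rcases eq_or_ne j i with rfl | hji
      · simp
      · rw [if_neg hji, Pi.single_eq_of_ne hji]; simp
    have hsum : ∑ j : Fin p, (max (|(Pi.single i (1:ℝ) : Fin p → ℝ) j| - (1 - ε) * v) 0) ^ q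
        = (max (1 - (1 - ε) * v) 0) ^ q := by
      rw [Finset.sum_eq_single i]
      · rw [habs i]; simp
      · intro j _ hji
        rw [habs j, if_neg hji]
        have : max (0 - (1-ε)*v) 0 = 0 := by
          apply max_eq_right; nlinarith
        rw [this, Real.zero_rpow hq0']
      · intro h; exact absurd (Finset.mem_univ i) h
    rw [hsum] at heq
    have hm : max (1 - (1 - ε) * v) 0 = ε * v := by
      have := congrArg (fun t => t ^ (1/q)) heq
      simpa [← hv, one_div, Real.rpow_rpow_inv (le_max_right _ _ : (0:ℝ) ≤ max (1 - (1-ε)*v) 0) hq0',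
        Real.rpow_rpow_inv (mul_nonneg hε0.le hv0) hq0'] using this
    have hveq : v = 1 := by
      rcases le_or_gt 0 (1 - (1 - ε) * v) with h | h
      · rw [max_eq_left h] at hm; nlinarith
      · rw [max_eq_right h.le] at hm
        have : v = 0 := by nlinarith
        rw [this] at h; norm_num at h
    have hlq : lqNorm p q (Pi.single i (1:ℝ)) = 1 := by
      unfold lqNorm
      have : ∑ j : Fin p, |(Pi.single i (1:ℝ) : Fin p → ℝ) j| ^ q = 1 := by
        rw [Finset.sum_eq_single i]
        · rw [habs i]; simp
        · intro j _ hji; rw [habs j, if_neg hji, Real.zero_rpow hq0']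
        · intro h; exact absurd (Finset.mem_univ i) h
      rw [this, Real.one_rpow]
    rw [hveq, hlq]
  · -- all ones
    set v := N (fun _ : Fin p => (1:ℝ)) with hv
    have hv0 : 0 ≤ v := hN0 _
    have heq := hNeq (fun _ : Fin p => (1:ℝ))
    simp only [abs_one] at heq
    rw [Finset.sum_const, Finset.card_univ, Fintype.card_fin, nsmul_eq_mul] at heq
    have hlq : lqNorm p q (fun _ : Fin p => (1:ℝ)) = (p:ℝ) ^ (1/q) := by
      unfold lqNorm
      simp [Real.one_rpow]
    rcases Nat.eq_zero_or_pos p with rfl | hp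
    · have : ε * v = 0 := by
        have h0 : (ε * v) ^ q = 0 := by rw [← heq]; norm_num
        exact (Real.rpow_eq_zero (mul_nonneg hε0.le hv0) hq0').mp h0
      have hv' : v = 0 := by nlinarith
      rw [hlq, hv']
      norm_num
      rw [Real.zero_rpow (by simpa using one_div_ne_zero hq0' : q⁻¹ ≠ 0)]
      simp
    · have hp0 : (0:ℝ) < (p:ℝ) := Nat.cast_pos.mpr hp
      set m := max (1 - (1 - ε) * v) 0 with hmdef
      have hm0 : 0 ≤ m := le_max_right _ _
      have hkey : (p:ℝ) ^ (1/q) * m = ε * v := by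
        have := congrArg (fun t => t ^ (1/q)) heq
        rw [Real.mul_rpow hp0.le (Real.rpow_nonneg hm0 _), one_div,
          Real.rpow_rpow_inv hm0 hq0', Real.rpow_rpow_inv (mul_nonneg hε0.le hv0) hq0'] at this
        rw [← one_div] at this
        exact this
      have hveq : v = (p:ℝ) ^ (1/q) / D := by
        rcases le_or_gt 0 (1 - (1 - ε) * v) with h | h
        · rw [hmdef, max_eq_left h] at hkey
          have hD' : D ≠ 0 := ne_of_gt hD
          field_simp
          rw [hDdef]; nlinarith
        · rw [hmdef, max_eq_right h.le] at hkey
          have hpq : 0 < (p:ℝ) ^ (1/q) := Real.rpow_pos_of_pos hp0 _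
          have : v = 0 := by nlinarith
          rw [this] at h; norm_num at h
      rw [hlq, hveq]
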